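/- In D_n, if d_B(x,y) ≥ 3R then ‖φ_R(x) − φ_R(y)‖₂ ≥ R√2/8, where φ_R(x) = (max(3R/2 − d_B(p,x), 0))_{p ∈ RG^{n+}}. -/

import Mathlib

open scoped BigOperators

/-- The space of persistence diagrams on one point: `T ∪ {Δ}`, where
`T = {(x₁,x₂) : x₂ > x₁ ≥ 0}` and `none` plays the role of the diagonal `Δ`. -/
abbrev D1 : Type := Option {p : ℝ × ℝ // 0 ≤ p.1 ∧ p.1 < p.2}

/-- The bottleneck distance on `D1`. -/
noncomputable def dB : D1 → D1 → ℝ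
  | none, none => 0
  | none, some p => (p.1.2 - p.1.1) / 2
  | some p, none => (p.1.2 - p.1.1) / 2
  | some p, some q =>
      min (max |p.1.1 - q.1.1| |p.1.2 - q.1.2|)
        (max ((p.1.2 - p.1.1) / 2) ((q.1.2 - q.1.1) / 2))

/-- max over coordinates. -/
noncomputable def dBmax {N : ℕ} (x y : Fin N → D1) : ℝ :=
  Finset.univ.fold max 0 (fun i => dB (x i) (y i))

/-- bottleneck distance on tuples, min over permutations. -/
noncomputable def dBn {N : ℕ} (x y : Fin N → D1) : ℝ :=
  Finset.univ.inf' Finset.univ_nonempty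
    (fun ψ : Equiv.Perm (Fin N) => dBmax x (y ∘ ψ))

def RGplus (R : ℝ) : Set D1 :=
  insert none {d : D1 | ∃ p, d = some p ∧ ∃ m k : ℕ,
    Odd m ∧ 1 ≤ m ∧ Even k ∧ 4 ≤ k ∧ m + 3 ≤ k ∧ p.1 = ((m : ℝ) * R, (k : ℝ) * R)}

def inBox (L : ℝ) : D1 → Prop
  | none => True
  | some p => p.1.1 ∈ Set.Icc 0 L ∧ p.1.2 ∈ Set.Icc 0 L

/-- Diagrams in `D_n` with all points in `RG⁺`, as multisets of cardinality `N`. -/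
def RGn (R : ℝ) (N : ℕ) : Set (Multiset D1) :=
  {m | Multiset.card m = N ∧ ∀ a ∈ m, a ∈ RGplus R}

/-- Bottleneck distance from a tuple to a diagram presented as a multiset. -/
noncomputable def dBnm {N : ℕ} (x : Fin N → D1) (m : Multiset D1) : ℝ :=
  sInf {r | ∃ g : Fin N → D1, (↑(List.ofFn g) : Multiset D1) = m ∧ dBn x g = r}

/-- If `d_B(x,y) ≥ 3R` then `‖φ_R(x) − φ_R(y)‖₂ ≥ R√2/8`, where
`φ_R(x) = (max (3R/2 − d_B(p,x)) 0)_{p ∈ RGⁿ⁺}`. -/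
lemma half_pers_le (p q : {p : ℝ × ℝ // 0 ≤ p.1 ∧ p.1 < p.2}) :
    (p.1.2 - p.1.1)/2 ≤ (q.1.2 - q.1.1)/2 + max |p.1.1 - q.1.1| |p.1.2 - q.1.2| := by
  have h1 : -|p.1.1 - q.1.1| ≤ p.1.1 - q.1.1 := neg_abs_le _
  have h2 : p.1.2 - q.1.2 ≤ |p.1.2 - q.1.2| := le_abs_self _
  have h3 := le_max_left |p.1.1 - q.1.1| |p.1.2 - q.1.2|
  have h4 := le_max_right |p.1.1 - q.1.1| |p.1.2 - q.1.2|
  linarith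

lemma pers_nonneg (p : {p : ℝ × ℝ // 0 ≤ p.1 ∧ p.1 < p.2}) : 0 ≤ (p.1.2 - p.1.1)/2 := by
  have := p.2.2; linarith

lemma dB_nonneg (a b : D1) : 0 ≤ dB a b := by
  match a, b with
  | none, none => simp [dB]
  | none, some p => exact pers_nonneg p
  | some p, none => exact pers_nonneg p
  | some p, some q =>
    simp only [dB, le_min_iff]
    constructor
    · exact le_max_of_le_left (abs_nonneg _)
    · exact le_max_of_le_left (pers_nonneg p)

lemma dB_comm (a b : D1) : dB a b = dB b a := by
  match a, b with
  | none, none => rfl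
  | none, some p => rfl
  | some p, none => rfl
  | some p, some q =>
    simp only [dB, abs_sub_comm p.1.1 q.1.1, abs_sub_comm p.1.2 q.1.2,
      max_comm ((p.1.2 - p.1.1)/2)]

lemma min_max_tri (Mab Mbc Mac pa pb pc : ℝ) (h0b : 0 ≤ pb) (h0a : 0 ≤ pa)
    (hMab : 0 ≤ Mab) (hMbc : 0 ≤ Mbc) (hMtri : Mac ≤ Mab + Mbc)
    (hab : pa ≤ pb + Mab) (hcb : pc ≤ pb + Mbc) :
    min Mac (max pa pc) ≤ min Mab (max pa pb) + min Mbc (max pb pc) := by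
  rcases le_or_gt Mab (max pa pb) with h1 | h1 <;>
    rcases le_or_gt Mbc (max pb pc) with h2 | h2
  · rw [min_eq_left h1, min_eq_left h2]
    exact le_trans (min_le_left _ _) hMtri
  · rw [min_eq_left h1, min_eq_right h2.le]
    refine le_trans (min_le_right _ _) (max_le ?_ ?_)
    · have := le_max_left pb pc; linarith
    · have := le_max_right pb pc; linarith
  · rw [min_eq_right h1.le, min_eq_left h2]
    refine le_trans (min_le_right _ _) (max_le ?_ ?_)
    · have := le_max_left pa pb; linarith
    · have := le_max_right pa pb; linarith
  · rw [min_eq_right h1.le, min_eq_right h2.le]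
    refine le_trans (min_le_right _ _) (max_le ?_ ?_)
    · have := le_max_left pa pb
      have : (0:ℝ) ≤ max pb pc := le_trans h0b (le_max_left _ _); linarith [le_max_left pa pb]
    · have := le_max_right pb pc
      have : (0:ℝ) ≤ max pa pb := le_trans h0a (le_max_left _ _); linarith [le_max_right pb pc]

lemma dB_triangle (a b c : D1) : dB a c ≤ dB a b + dB b c := by
  match a, b, c with
  | none, none, none => simp [dB]
  | none, none, some c => simp [dB]
  | none, some b, none =>
    have := pers_nonneg b; simp only [dB]; linarith
  | none, some b, some c =>
    simp only [dB]
    rcases min_le_iff.mpr (Or.inl (le_refl (max |b.1.1 - c.1.1| |b.1.2 - c.1.2|))) with h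
    rcases le_or_gt (max |b.1.1 - c.1.1| |b.1.2 - c.1.2|)
      (max ((b.1.2 - b.1.1)/2) ((c.1.2 - c.1.1)/2)) with hm | hm
    · rw [min_eq_left hm]
      have := half_pers_le c b
      rw [abs_sub_comm c.1.1 b.1.1, abs_sub_comm c.1.2 b.1.2] at this
      linarith
    · rw [min_eq_right hm.le]
      have h1 := le_max_right ((b.1.2 - b.1.1)/2) ((c.1.2 - c.1.1)/2)
      have := pers_nonneg b
      linarith
  | some a, none, none => simp [dB]
  | some a, none, some c =>
    simp only [dB]
    have h := min_le_right (max |a.1.1 - c.1.1| |a.1.2 - c.1.2|)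
      (max ((a.1.2 - a.1.1)/2) ((c.1.2 - c.1.1)/2))
    have h1 := pers_nonneg a; have h2 := pers_nonneg c
    have := max_le_add_of_nonneg (α := ℝ) h1 h2
    linarith
  | some a, some b, none =>
    simp only [dB]
    rcases le_or_gt (max |a.1.1 - b.1.1| |a.1.2 - b.1.2|)
      (max ((a.1.2 - a.1.1)/2) ((b.1.2 - b.1.1)/2)) with hm | hm
    · rw [min_eq_left hm]
      have := half_pers_le a b
      linarith
    · rw [min_eq_right hm.le]
      have h1 := le_max_left ((a.1.2 - a.1.1)/2) ((b.1.2 - b.1.1)/2)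
      have := pers_nonneg b
      linarith
  | some a, some b, some c =>
    simp only [dB]
    have hab : (a.1.2 - a.1.1)/2 ≤ (b.1.2 - b.1.1)/2 + max |a.1.1 - b.1.1| |a.1.2 - b.1.2| :=
      half_pers_le a b
    have hcb : (c.1.2 - c.1.1)/2 ≤ (b.1.2 - b.1.1)/2 + max |b.1.1 - c.1.1| |b.1.2 - c.1.2| := by
      have := half_pers_le c b
      rw [abs_sub_comm c.1.1 b.1.1, abs_sub_comm c.1.2 b.1.2] at this
      linarith
    have hMtri : max |a.1.1 - c.1.1| |a.1.2 - c.1.2| ≤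
        max |a.1.1 - b.1.1| |a.1.2 - b.1.2| + max |b.1.1 - c.1.1| |b.1.2 - c.1.2| := by
      apply max_le
      · calc |a.1.1 - c.1.1| ≤ |a.1.1 - b.1.1| + |b.1.1 - c.1.1| := abs_sub_le _ _ _
          _ ≤ _ := add_le_add (le_max_left _ _) (le_max_left _ _)
      · calc |a.1.2 - c.1.2| ≤ |a.1.2 - b.1.2| + |b.1.2 - c.1.2| := abs_sub_le _ _ _
          _ ≤ _ := add_le_add (le_max_right _ _) (le_max_right _ _)
    exact min_max_tri _ _ _ _ _ _ (pers_nonneg b) (pers_nonneg a)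
      (le_trans (abs_nonneg _) (le_max_left _ _)) (le_trans (abs_nonneg _) (le_max_left _ _))
      hMtri hab hcb


lemma dBmax_nonneg {N : ℕ} (x y : Fin N → D1) : 0 ≤ dBmax x y :=
  (Finset.le_fold_max _).mpr (Or.inl le_rfl)

lemma le_dBmax {N : ℕ} (x y : Fin N → D1) (i : Fin N) : dB (x i) (y i) ≤ dBmax x y :=
  (Finset.le_fold_max _).mpr (Or.inr ⟨i, Finset.mem_univ i, le_rfl⟩)

lemma dBmax_le {N : ℕ} {x y : Fin N → D1} {c : ℝ} (h0 : 0 ≤ c)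
    (h : ∀ i, dB (x i) (y i) ≤ c) : dBmax x y ≤ c :=
  (Finset.fold_max_le _).mpr ⟨h0, fun i _ => h i⟩

lemma dBmax_comp {N : ℕ} (x y : Fin N → D1) (σ : Equiv.Perm (Fin N)) :
    dBmax (x ∘ σ) (y ∘ σ) = dBmax x y := by
  apply le_antisymm
  · exact dBmax_le (dBmax_nonneg x y) (fun i => le_dBmax x y (σ i))
  · refine dBmax_le (dBmax_nonneg _ _) (fun i => ?_)
    have := le_dBmax (x ∘ σ) (y ∘ σ) (σ⁻¹ i)
    simpa [Function.comp, Equiv.Perm.coe_inv, Equiv.apply_symm_apply] using this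

lemma dBmax_triangle {N : ℕ} (x y z : Fin N → D1) :
    dBmax x z ≤ dBmax x y + dBmax y z :=
  dBmax_le (add_nonneg (dBmax_nonneg x y) (dBmax_nonneg y z))
    (fun i => le_trans (dB_triangle _ _ _)
      (add_le_add (le_dBmax x y i) (le_dBmax y z i)))

lemma dBn_le {N : ℕ} (x y : Fin N → D1) (ψ : Equiv.Perm (Fin N)) :
    dBn x y ≤ dBmax x (y ∘ ψ) :=
  Finset.inf'_le _ (Finset.mem_univ ψ)

lemma dBn_exists {N : ℕ} (x y : Fin N → D1) :
    ∃ ψ : Equiv.Perm (Fin N), dBn x y = dBmax x (y ∘ ψ) := by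
  obtain ⟨ψ, _, h⟩ := Finset.exists_mem_eq_inf' (Finset.univ_nonempty)
    (fun ψ : Equiv.Perm (Fin N) => dBmax x (y ∘ ψ))
  exact ⟨ψ, h⟩

lemma dBn_nonneg {N : ℕ} (x y : Fin N → D1) : 0 ≤ dBn x y := by
  obtain ⟨ψ, h⟩ := dBn_exists x y
  rw [h]; exact dBmax_nonneg _ _

lemma dBn_le_dBmax {N : ℕ} (x y : Fin N → D1) : dBn x y ≤ dBmax x y := by
  simpa using dBn_le x y 1

lemma dBn_comm_le {N : ℕ} (x y : Fin N → D1) : dBn y x ≤ dBn x y := by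
  obtain ⟨ψ, h⟩ := dBn_exists x y
  rw [h]
  refine le_trans (dBn_le y x ψ⁻¹) ?_
  refine dBmax_le (dBmax_nonneg _ _) (fun i => ?_)
  have h2 := le_dBmax x (y ∘ ψ) (ψ⁻¹ i)
  simp only [Function.comp_apply, Equiv.Perm.coe_inv, Equiv.apply_symm_apply] at h2 ⊢
  rw [dB_comm]
  exact h2

lemma dBn_comm {N : ℕ} (x y : Fin N → D1) : dBn x y = dBn y x :=
  le_antisymm (dBn_comm_le y x) (dBn_comm_le x y)

lemma dBn_comp_right_le {N : ℕ} (x g : Fin N → D1) (σ : Equiv.Perm (Fin N)) :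
    dBn x (g ∘ σ) ≤ dBn x g := by
  obtain ⟨ψ₀, h⟩ := dBn_exists x g
  rw [h]
  have hfun : (g ∘ σ) ∘ (ψ₀.trans σ⁻¹) = g ∘ ψ₀ := by
    funext i
    simp [Equiv.trans, Function.comp, Equiv.Perm.coe_inv, Equiv.apply_symm_apply]
  have := dBn_le x (g ∘ σ) (ψ₀.trans σ⁻¹)
  rwa [hfun] at this

lemma dBn_comp_right {N : ℕ} (x g : Fin N → D1) (σ : Equiv.Perm (Fin N)) :
    dBn x (g ∘ σ) = dBn x g := by
  refine le_antisymm (dBn_comp_right_le x g σ) ?_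
  have := dBn_comp_right_le x (g ∘ σ) σ⁻¹
  have hfun : (g ∘ ⇑σ) ∘ ⇑σ⁻¹ = g := by
    funext i; simp [Function.comp, Equiv.Perm.coe_inv, Equiv.apply_symm_apply]
  rwa [hfun] at this

lemma dBn_triangle {N : ℕ} (x y z : Fin N → D1) :
    dBn x z ≤ dBn x y + dBn y z := by
  obtain ⟨ψ₁, h₁⟩ := dBn_exists x y
  obtain ⟨ψ₂, h₂⟩ := dBn_exists y z
  rw [h₁, h₂]
  have hkey : dBn x z ≤ dBmax x (z ∘ (ψ₁.trans ψ₂)) := dBn_le x z _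
  refine le_trans hkey (le_trans (dBmax_triangle x (y ∘ ψ₁) (z ∘ (ψ₁.trans ψ₂))) ?_)
  have : dBmax (y ∘ ψ₁) (z ∘ (ψ₁.trans ψ₂)) = dBmax y (z ∘ ψ₂) := by
    have : z ∘ (ψ₁.trans ψ₂) = (z ∘ ψ₂) ∘ ψ₁ := rfl
    rw [this, dBmax_comp y (z ∘ ψ₂) ψ₁]
  rw [this]

lemma perm_exists_fin_equiv {α : Type*} {l₁ l₂ : List α} (h : l₁.Perm l₂) :
    ∃ e : Fin l₁.length ≃ Fin l₂.length, ∀ i, l₁.get i = l₂.get (e i) := by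
  induction h with
  | nil => exact ⟨Equiv.refl _, fun i => i.elim0⟩
  | cons a h ih =>
    obtain ⟨e, he⟩ := ih
    refine ⟨(finSuccEquiv _).trans ((Equiv.optionCongr e).trans (finSuccEquiv _).symm), ?_⟩
    intro i
    refine Fin.cases ?_ (fun j => ?_) i
    · simp
    · simpa using he j
  | swap a b l =>
    have h0 : (0 : ℕ) < (b::a::l).length := by simp
    have h1 : (1 : ℕ) < (b::a::l).length := by simp
    refine ⟨Equiv.swap ⟨0, h0⟩ ⟨1, h1⟩, fun i => ?_⟩
    obtain ⟨iv, hiv⟩ := i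
    match iv, hiv with
    | 0, hiv => simp [Equiv.swap_apply_def, Fin.ext_iff]
    | 1, hiv => simp [Equiv.swap_apply_def, Fin.ext_iff]
    | (n+2), hiv => simp [Equiv.swap_apply_def, Fin.ext_iff]
  | trans h₁ h₂ ih₁ ih₂ =>
    obtain ⟨e₁, he₁⟩ := ih₁
    obtain ⟨e₂, he₂⟩ := ih₂
    exact ⟨e₁.trans e₂, fun i => (he₁ i).trans (he₂ (e₁ i))⟩

lemma multiset_eq_perm {α : Type*} {N : ℕ} {g g' : Fin N → α}
    (h : (↑(List.ofFn g) : Multiset α) = ↑(List.ofFn g')) :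
    ∃ σ : Equiv.Perm (Fin N), ∀ i, g i = g' (σ i) := by
  have hp : (List.ofFn g).Perm (List.ofFn g') := Multiset.coe_eq_coe.mp h
  obtain ⟨e, he⟩ := perm_exists_fin_equiv hp
  refine ⟨(finCongr (List.length_ofFn (f := g))).symm.trans
    (e.trans (finCongr (List.length_ofFn (f := g')))), fun i => ?_⟩
  have h1 := he ((finCongr (List.length_ofFn (f := g))).symm i)
  simp only [List.get_ofFn] at h1
  convert h1 using 2 <;> rfl

lemma exists_enum {N : ℕ} {m : Multiset D1} (hm : Multiset.card m = N) :
    ∃ g : Fin N → D1, (↑(List.ofFn g) : Multiset D1) = m := by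
  have hl : m.toList.length = N := by rw [Multiset.length_toList, hm]
  refine ⟨fun i => m.toList.get (Fin.cast hl.symm i), ?_⟩
  have : List.ofFn (fun i : Fin N => m.toList.get (Fin.cast hl.symm i)) = m.toList := by
    apply List.ext_get
    · simp [hl]
    · intro n h1 h2
      simp [List.get_ofFn]
  rw [this, Multiset.coe_toList]

lemma dBnm_set_nonempty {N : ℕ} (x : Fin N → D1) {m : Multiset D1}
    (hm : Multiset.card m = N) :
    {r | ∃ g : Fin N → D1, (↑(List.ofFn g) : Multiset D1) = m ∧ dBn x g = r}.Nonempty := by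
  obtain ⟨g, hg⟩ := exists_enum hm
  exact ⟨dBn x g, g, hg, rfl⟩

lemma dBnm_bddBelow {N : ℕ} (x : Fin N → D1) (m : Multiset D1) :
    BddBelow {r | ∃ g : Fin N → D1, (↑(List.ofFn g) : Multiset D1) = m ∧ dBn x g = r} := by
  refine ⟨0, fun r hr => ?_⟩
  obtain ⟨g, _, hg⟩ := hr
  rw [← hg]; exact dBn_nonneg x g

lemma dBnm_le {N : ℕ} (x : Fin N → D1) {m : Multiset D1} {g : Fin N → D1}
    (h : (↑(List.ofFn g) : Multiset D1) = m) : dBnm x m ≤ dBn x g :=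
  csInf_le (dBnm_bddBelow x m) ⟨g, h, rfl⟩

lemma le_dBnm {N : ℕ} {x : Fin N → D1} {m : Multiset D1} {c : ℝ}
    (hm : Multiset.card m = N)
    (h : ∀ g : Fin N → D1, (↑(List.ofFn g) : Multiset D1) = m → c ≤ dBn x g) :
    c ≤ dBnm x m := by
  refine le_csInf (dBnm_set_nonempty x hm) (fun r hr => ?_)
  obtain ⟨g, hg, hgr⟩ := hr
  rw [← hgr]; exact h g hg

lemma dBnm_nonneg {N : ℕ} (x : Fin N → D1) {m : Multiset D1}
    (hm : Multiset.card m = N) : 0 ≤ dBnm x m :=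
  le_dBnm hm (fun g _ => dBn_nonneg x g)

lemma dBnm_exists_lt {N : ℕ} {x : Fin N → D1} {m : Multiset D1} {c : ℝ}
    (hm : Multiset.card m = N) (h : dBnm x m < c) :
    ∃ g : Fin N → D1, (↑(List.ofFn g) : Multiset D1) = m ∧ dBn x g < c := by
  obtain ⟨r, hr, hrc⟩ := exists_lt_of_csInf_lt (dBnm_set_nonempty x hm) h
  obtain ⟨g, hg, hgr⟩ := hr
  exact ⟨g, hg, hgr ▸ hrc⟩

lemma dBn_le_dBnm_add {N : ℕ} (x y : Fin N → D1) {m : Multiset D1}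
    (hm : Multiset.card m = N) : dBn x y ≤ dBnm x m + dBnm y m := by
  have key : ∀ g₁ g₂ : Fin N → D1, (↑(List.ofFn g₁) : Multiset D1) = m →
      (↑(List.ofFn g₂) : Multiset D1) = m → dBn x y ≤ dBn x g₁ + dBn y g₂ := by
    intro g₁ g₂ h₁ h₂
    obtain ⟨σ, hσ⟩ := multiset_eq_perm (h₁.trans h₂.symm)
    have hg : g₁ = g₂ ∘ σ := funext hσ
    have h3 : dBn y g₁ = dBn y g₂ := by rw [hg, dBn_comp_right]
    have h4 := dBn_triangle x g₁ y
    rw [dBn_comm g₁ y] at h4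
    linarith
  have h5 : dBn x y - dBnm x m ≤ dBnm y m := by
    refine le_csInf (dBnm_set_nonempty y hm) (fun r hr => ?_)
    obtain ⟨g₂, hg₂, hgr⟩ := hr
    rw [← hgr]
    have h6 : dBn x y - dBn y g₂ ≤ dBnm x m := by
      refine le_csInf (dBnm_set_nonempty x hm) (fun r' hr' => ?_)
      obtain ⟨g₁, hg₁, hgr'⟩ := hr'
      rw [← hgr']
      have := key g₁ g₂ hg₁ hg₂
      linarith
    linarith
  linarith

lemma exists_close {R : ℝ} (hR : 0 < R) (d : D1) :
    ∃ a ∈ RGplus R, dB d a ≤ 11 * R / 8 := by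
  match d with
  | none =>
    refine ⟨none, Set.mem_insert _ _, ?_⟩
    simp [dB]; linarith
  | some q =>
    obtain ⟨hq1, hq12⟩ := q.2
    rcases le_or_gt (q.1.2 - q.1.1) (11 * R / 4) with hsmall | hbig
    · refine ⟨none, Set.mem_insert _ _, ?_⟩
      show (q.1.2 - q.1.1) / 2 ≤ 11 * R / 8
      linarith
    · -- big persistence: snap to grid
      set j : ℕ := ⌊q.1.1 / (2 * R)⌋₊ with hj
      have h2R : (0:ℝ) < 2 * R := by linarith
      have hq2 : (0:ℝ) ≤ q.1.2 := le_of_lt (lt_of_le_of_lt hq1 hq12)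
      have hj1 : (j : ℝ) ≤ q.1.1 / (2 * R) := Nat.floor_le (by positivity)
      have hj2 : q.1.1 / (2 * R) < (j : ℝ) + 1 := Nat.lt_floor_add_one _
      have hjl : (j : ℝ) * (2 * R) ≤ q.1.1 := (le_div_iff₀ h2R).mp hj1
      have hju : q.1.1 < ((j : ℝ) + 1) * (2 * R) := (div_lt_iff₀ h2R).mp hj2
      set m : ℕ := 2 * j + 1 with hm
      have hmR : |q.1.1 - (m : ℝ) * R| ≤ R := by
        rw [abs_le]
        push_cast [hm]
        constructor <;> nlinarith
      have hq2pos : (0:ℝ) ≤ q.1.2 / (2 * R) + 1 / 2 := by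
        have := div_nonneg hq2 h2R.le; linarith
      set k0 : ℕ := ⌊q.1.2 / (2 * R) + 1 / 2⌋₊ with hk0
      have hk1 : (k0 : ℝ) ≤ q.1.2 / (2 * R) + 1 / 2 := Nat.floor_le hq2pos
      have hk2 : q.1.2 / (2 * R) + 1 / 2 < (k0 : ℝ) + 1 := Nat.lt_floor_add_one _
      have hkl : ((k0 : ℝ) - 1/2) * (2 * R) ≤ q.1.2 :=
        (le_div_iff₀ h2R).mp (by linarith)
      have hku : q.1.2 < ((k0 : ℝ) + 1/2) * (2 * R) :=
        (div_lt_iff₀ h2R).mp (by linarith)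
      set k : ℕ := 2 * k0 with hk
      rcases le_or_gt (m + 3) k with hcase | hcase
      · -- nearest even works
        have hmk : (m : ℝ) * R < (k : ℝ) * R := by
          have h : (m : ℝ) + 3 ≤ (k : ℝ) := by exact_mod_cast hcase
          nlinarith
        have hm0 : (0:ℝ) ≤ (m : ℝ) * R := by positivity
        refine ⟨some ⟨((m : ℝ) * R, (k : ℝ) * R), hm0, hmk⟩, ?_, ?_⟩
        · refine Set.mem_insert_of_mem _ ⟨_, rfl, m, k, ⟨j, by ring⟩, by omega,
            ⟨k0, by omega⟩, by omega, hcase, rfl⟩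
        · show min _ _ ≤ 11 * R / 8
          have h2 : |q.1.2 - (k : ℝ) * R| ≤ R := by
            rw [abs_le]
            push_cast [hk]
            constructor <;> nlinarith
          exact le_trans (min_le_left _ _)
            (max_le (hmR.trans (by linarith)) (h2.trans (by linarith)))
      · -- bump up to k' = m + 3
        have hmk : (m : ℝ) * R < ((m + 3 : ℕ) : ℝ) * R := by
          push_cast; nlinarith
        have hm0 : (0:ℝ) ≤ (m : ℝ) * R := by positivity
        refine ⟨some ⟨((m : ℝ) * R, ((m + 3 : ℕ) : ℝ) * R), hm0, hmk⟩, ?_, ?_⟩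
        · refine Set.mem_insert_of_mem _ ⟨_, rfl, m, m + 3, ⟨j, by ring⟩, by omega,
            ⟨j + 2, by omega⟩, by omega, le_rfl, rfl⟩
        · show min _ _ ≤ 11 * R / 8
          have hmR1 := (abs_le.mp hmR).1
          have hklt : ((k : ℕ) : ℝ) ≤ (m : ℝ) + 2 := by
            have h : k ≤ m + 2 := by omega
            exact_mod_cast h
          have hkr : ((k : ℕ) : ℝ) * R ≤ ((m : ℝ) + 2) * R :=
            mul_le_mul_of_nonneg_right hklt hR.le
          have h2 : |q.1.2 - ((m + 3 : ℕ) : ℝ) * R| ≤ 11 * R / 8 := by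
            rw [abs_le]
            push_cast [hk] at hkr ⊢
            constructor <;> linarith
          exact le_trans (min_le_left _ _)
            (max_le (hmR.trans (by linarith)) h2)

lemma exists_witness {N : ℕ} {R : ℝ} (hR : 0 < R) (x : Fin N → D1) :
    ∃ m ∈ RGn R N, dBnm x m ≤ 11 * R / 8 := by
  choose g hg1 hg2 using fun i => exists_close hR (x i)
  refine ⟨↑(List.ofFn g), ⟨by simp, ?_⟩, ?_⟩
  · intro a ha
    rw [Multiset.mem_coe, List.mem_ofFn] at ha
    obtain ⟨i, hi⟩ := ha
    exact hi ▸ hg1 i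
  · exact le_trans (dBnm_le x rfl)
      (le_trans (dBn_le_dBmax x g) (dBmax_le (by linarith) hg2))

/-- second coordinate (or 0 for the diagonal). -/
noncomputable def c2 : D1 → ℝ
  | none => 0
  | some p => p.1.2

lemma close_mem_SS {R : ℝ} (hR : 0 < R) {a b : D1} (ha : a ∈ RGplus R)
    (hd : dB b a < 3 * R / 2) :
    a = none ∨ ∃ p, a = some p ∧ p.1.2 ≤ c2 b + 3 * R / 2 := by
  rcases ha with h | h
  · exact Or.inl h
  · obtain ⟨p, rfl, mm, k, hodd, hm1, heven, hk4, hmk, hp⟩ := h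
    right
    refine ⟨p, rfl, ?_⟩
    have hpers : 3 * R / 2 ≤ (p.1.2 - p.1.1) / 2 := by
      rw [hp]
      have : (mm : ℝ) + 3 ≤ (k : ℝ) := by exact_mod_cast hmk
      simp only
      nlinarith
    match b with
    | none =>
      exact absurd hd (not_lt.mpr (by show 3*R/2 ≤ (p.1.2 - p.1.1)/2; exact hpers))
    | some qb =>
      have hsnd : max ((qb.1.2 - qb.1.1)/2) ((p.1.2 - p.1.1)/2) ≥ 3 * R / 2 :=
        le_trans hpers (le_max_right _ _)
      have hfst : max |qb.1.1 - p.1.1| |qb.1.2 - p.1.2| < 3 * R / 2 := by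
        by_contra hcon
        push_neg at hcon
        have : dB (some qb) (some p) ≥ 3 * R / 2 := le_min hcon hsnd
        linarith
      have := lt_of_le_of_lt (le_max_right |qb.1.1 - p.1.1| _) hfst
      have h2 := (abs_lt.mp this).1
      show p.1.2 ≤ qb.1.2 + 3 * R / 2
      linarith

lemma SS_finite {R : ℝ} (hR : 0 < R) (C : ℝ) :
    {a : D1 | a ∈ RGplus R ∧ (a = none ∨ ∃ p, a = some p ∧ p.1.2 ≤ C)}.Finite := by
  set S := {a : D1 | a ∈ RGplus R ∧ (a = none ∨ ∃ p, a = some p ∧ p.1.2 ≤ C)}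
  set φ : D1 → Option (ℝ × ℝ) := Option.map Subtype.val with hφ
  have hinj : Function.Injective φ := Option.map_injective Subtype.val_injective
  apply Set.Finite.of_finite_image _ hinj.injOn
  set K := ⌊C / R⌋₊
  have hsub : φ '' S ⊆ insert none
      ((fun mk : ℕ × ℕ => some (((mk.1 : ℝ) * R, (mk.2 : ℝ) * R) : ℝ × ℝ)) ''
        (Set.Iic (K, K))) := by
    rintro o ⟨a, ⟨haRG, hbd⟩, rfl⟩
    rcases haRG with h | h
    · subst h; exact Set.mem_insert _ _
    · obtain ⟨p, rfl, mm, k, _, _, _, _, hmk, hp⟩ := h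
      rcases hbd with h' | ⟨p', hp', hC⟩
      · exact absurd h' (by simp)
      · have hpp : p = p' := by injection hp'
        subst hpp
        have hkC : (k : ℝ) * R ≤ C := by rw [hp] at hC; exact hC
        have hkK : k ≤ K := Nat.le_floor ((le_div_iff₀ hR).mpr hkC)
        have hmK : mm ≤ K := le_trans (by omega) hkK
        refine Set.mem_insert_of_mem _ ⟨(mm, k), ?_, ?_⟩
        · exact ⟨hmK, hkK⟩
        · show some ((mm : ℝ) * R, (k : ℝ) * R) = Option.map Subtype.val (some p)
          simp [hp]
  refine Set.Finite.subset (Set.Finite.insert _ (Set.Finite.image _ (Set.finite_Iic _))) hsub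

lemma multisets_finite {N : ℕ} {S : Set D1} (hS : S.Finite) :
    {m : Multiset D1 | Multiset.card m = N ∧ ∀ a ∈ m, a ∈ S}.Finite := by
  have hsub : {m : Multiset D1 | Multiset.card m = N ∧ ∀ a ∈ m, a ∈ S} ⊆
      (fun g : Fin N → D1 => (↑(List.ofFn g) : Multiset D1)) '' {g | ∀ i, g i ∈ S} := by
    intro m hm
    obtain ⟨g, hg⟩ := exists_enum hm.1
    refine ⟨g, fun i => hm.2 _ ?_, hg⟩
    rw [← hg]
    exact Multiset.mem_coe.mpr (List.mem_ofFn.mpr ⟨i, rfl⟩)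
  refine Set.Finite.subset (Set.Finite.image _ ?_) hsub
  have he : {g : Fin N → D1 | ∀ i, g i ∈ S} = Set.pi Set.univ (fun _ => S) := by
    ext g; simp [Set.mem_pi]
  rw [he]
  exact Set.Finite.pi (fun _ => hS)

lemma support_elements {N : ℕ} {R : ℝ} (hR : 0 < R) {B : ℝ} (z : Fin N → D1)
    (hz : ∀ i, c2 (z i) ≤ B) {m : Multiset D1} (hcard : Multiset.card m = N)
    (hRG : ∀ a ∈ m, a ∈ RGplus R) (hlt : dBnm z m < 3 * R / 2) :
    ∀ a ∈ m, a ∈ RGplus R ∧ (a = none ∨ ∃ p, a = some p ∧ p.1.2 ≤ B + 3 * R / 2) := by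
  obtain ⟨g, hg, hglt⟩ := dBnm_exists_lt hcard hlt
  obtain ⟨ψ, hψ⟩ := dBn_exists z g
  intro a ha
  have ham := ha
  refine ⟨hRG a ha, ?_⟩
  rw [← hg, Multiset.mem_coe, List.mem_ofFn] at ha
  obtain ⟨j, hj⟩ := ha
  have h1 : dB (z (ψ⁻¹ j)) ((g ∘ ψ) (ψ⁻¹ j)) ≤ dBmax z (g ∘ ψ) := le_dBmax _ _ _
  have h2 : (g ∘ ψ) (ψ⁻¹ j) = a := by
    simp only [Function.comp_apply, Equiv.Perm.coe_inv, Equiv.apply_symm_apply]; exact hj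
  rw [h2, ← hψ] at h1
  have h3 : dB (z (ψ⁻¹ j)) a < 3 * R / 2 := lt_of_le_of_lt h1 hglt
  rcases close_mem_SS hR (hRG a ham) h3 with h | ⟨p, hp, hpb⟩
  · exact Or.inl h
  · exact Or.inr ⟨p, hp, le_trans hpb (by have := hz (ψ⁻¹ j); linarith)⟩


theorem phiR_far_lower_bound {N : ℕ} (R : ℝ) (hR : 0 < R)
    (x y : Fin N → D1) (hxy : 3 * R ≤ dBn x y) :
    R * Real.sqrt 2 / 8 ≤ Real.sqrt (∑' m : RGn R N,
      (max (3 * R / 2 - dBnm x m.1) 0 - max (3 * R / 2 - dBnm y m.1) 0) ^ 2) := by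
  classical
  set F : RGn R N → ℝ := fun m =>
    (max (3 * R / 2 - dBnm x m.1) 0 - max (3 * R / 2 - dBnm y m.1) 0) ^ 2 with hF
  -- summability
  set B : ℝ := Finset.univ.fold max 0 (fun i => max (c2 (x i)) (c2 (y i))) with hB
  have hzx : ∀ i, c2 (x i) ≤ B := fun i =>
    (Finset.le_fold_max _).mpr (Or.inr ⟨i, Finset.mem_univ i, le_max_left _ _⟩)
  have hzy : ∀ i, c2 (y i) ≤ B := fun i =>
    (Finset.le_fold_max _).mpr (Or.inr ⟨i, Finset.mem_univ i, le_max_right _ _⟩)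
  set T : Set (Multiset D1) := {m | Multiset.card m = N ∧ ∀ a ∈ m,
    a ∈ {a : D1 | a ∈ RGplus R ∧ (a = none ∨ ∃ p, a = some p ∧ p.1.2 ≤ B + 3 * R / 2)}}
    with hT
  have hTfin : T.Finite := multisets_finite (SS_finite hR (B + 3 * R / 2))
  have hsupp : Function.support F ⊆ Subtype.val ⁻¹' T := by
    intro m hm
    have hcard := m.2.1
    have hRG := m.2.2
    have hor : dBnm x m.1 < 3 * R / 2 ∨ dBnm y m.1 < 3 * R / 2 := by
      by_contra hcon
      push_neg at hcon
      apply hm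
      show F m = 0
      rw [hF]
      simp only
      rw [max_eq_right (by linarith [hcon.1]), max_eq_right (by linarith [hcon.2])]
      ring
    refine Set.mem_preimage.mpr ⟨hcard, ?_⟩
    rcases hor with h | h
    · exact support_elements hR x hzx hcard hRG h
    · exact support_elements hR y hzy hcard hRG h
  have hsummable : Summable F :=
    summable_of_finite_support
      (Set.Finite.subset (hTfin.preimage Subtype.val_injective.injOn) hsupp)
  -- witnesses
  obtain ⟨mx, hmxRG, hmx⟩ := exists_witness hR x
  obtain ⟨my, hmyRG, hmy⟩ := exists_witness hR y
  have hyx : 13 * R / 8 ≤ dBnm y mx := by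
    have := dBn_le_dBnm_add x y hmxRG.1
    linarith
  have hxmy : 13 * R / 8 ≤ dBnm x my := by
    have := dBn_le_dBnm_add x y hmyRG.1
    linarith
  have hne : (⟨mx, hmxRG⟩ : RGn R N) ≠ ⟨my, hmyRG⟩ := by
    intro h
    have : mx = my := congrArg Subtype.val h
    rw [this] at hmx
    linarith
  have hFa : R ^ 2 / 64 ≤ F ⟨mx, hmxRG⟩ := by
    rw [hF]
    simp only
    rw [max_eq_right (by linarith : 3 * R / 2 - dBnm y mx ≤ 0)]
    have h1 : R / 8 ≤ max (3 * R / 2 - dBnm x mx) 0 :=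
      le_trans (by linarith) (le_max_left _ _)
    calc R ^ 2 / 64 = (R / 8) ^ 2 := by ring
      _ ≤ (max (3 * R / 2 - dBnm x mx) 0) ^ 2 := by
          apply pow_le_pow_left₀ (by positivity) h1
      _ = (max (3 * R / 2 - dBnm x mx) 0 - 0) ^ 2 := by ring
  have hFb : R ^ 2 / 64 ≤ F ⟨my, hmyRG⟩ := by
    rw [hF]
    simp only
    rw [max_eq_right (by linarith : 3 * R / 2 - dBnm x my ≤ 0)]
    have h1 : R / 8 ≤ max (3 * R / 2 - dBnm y my) 0 :=
      le_trans (by linarith) (le_max_left _ _)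
    calc R ^ 2 / 64 = (R / 8) ^ 2 := by ring
      _ ≤ (max (3 * R / 2 - dBnm y my) 0) ^ 2 := by
          apply pow_le_pow_left₀ (by positivity) h1
      _ = (0 - max (3 * R / 2 - dBnm y my) 0) ^ 2 := by ring
  -- sum bound
  have hsum : R ^ 2 / 32 ≤ ∑' m : RGn R N, F m := by
    have hpair : ∑ i ∈ ({⟨mx, hmxRG⟩, ⟨my, hmyRG⟩} : Finset (RGn R N)), F i =
        F ⟨mx, hmxRG⟩ + F ⟨my, hmyRG⟩ := Finset.sum_pair hne
    have hle : ∑ i ∈ ({⟨mx, hmxRG⟩, ⟨my, hmyRG⟩} : Finset (RGn R N)), F i ≤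
        ∑' m : RGn R N, F m :=
      Summable.sum_le_tsum _ (fun i _ => sq_nonneg _) hsummable
    rw [hpair] at hle
    linarith
  have hsq : (R * Real.sqrt 2 / 8) ^ 2 = R ^ 2 / 32 := by
    rw [div_pow, mul_pow, Real.sq_sqrt (by norm_num : (0:ℝ) ≤ 2)]
    ring
  calc R * Real.sqrt 2 / 8 = Real.sqrt ((R * Real.sqrt 2 / 8) ^ 2) :=
        (Real.sqrt_sq (by positivity)).symm
    _ ≤ _ := by
        rw [hsq]
        exact Real.sqrt_le_sqrt hsum
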